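/- arXiv:2509.14032 — 3 statements merged into one kernel-verified Lean document; each statement's English description precedes it below -/
import Mathlib

section
/- Let C ⊆ X₁ × ⋯ × Xₘ be the feasible set {x ∈ X : cⱼ(x) ≥ αⱼ for all j}, where each Xᵢ ⊆ ℝ^{dᵢ} is convex and each constraint cⱼ is concave in xᵢ for each fixed x_{−i}. Let C′ be a connected component of C. Then for any player i and fixed x_{−i}, the slice C′ᵢ(x_{−i}) := {xᵢ ∈ Xᵢ : (xᵢ, x_{−i}) ∈ C′} is convex. -/
/-- Playerwise concavity of constraints implies convexity of the playerwise slices of any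
connected component `C'` of the feasible set `C`. -/
theorem slice_of_connectedComponent_convex (m : ℕ) (d : Fin m → ℕ)
    (X : ∀ i, Set (EuclideanSpace ℝ (Fin (d i))))
    (hXconv : ∀ i, Convex ℝ (X i)) (hXcomp : ∀ i, IsCompact (X i))
    (b : ℕ) (c : Fin b → (∀ i, EuclideanSpace ℝ (Fin (d i))) → ℝ) (α : Fin b → ℝ)
    (hccont : ∀ j, Continuous (c j))
    (hconc : ∀ j i (x : ∀ i, EuclideanSpace ℝ (Fin (d i))),
      ConcaveOn ℝ (X i) (fun xi => c j (Function.update x i xi)))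
    (C : Set (∀ i, EuclideanSpace ℝ (Fin (d i))))
    (hC : C = {x | (∀ i, x i ∈ X i) ∧ ∀ j, α j ≤ c j x})
    (x₀ : ∀ i, EuclideanSpace ℝ (Fin (d i))) (hx₀ : x₀ ∈ C)
    (i : Fin m) (x : ∀ i, EuclideanSpace ℝ (Fin (d i))) :
    Convex ℝ {xi : EuclideanSpace ℝ (Fin (d i)) |
      Function.update x i xi ∈ connectedComponentIn C x₀} := by
  set f : EuclideanSpace ℝ (Fin (d i)) → (∀ i, EuclideanSpace ℝ (Fin (d i))) :=
    fun xi => Function.update x i xi with hf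
  have hfc : Continuous f := by
    apply continuous_pi
    intro k
    by_cases hk : k = i
    · subst hk
      simpa [hf] using continuous_id'
    · simp only [hf, Function.update_of_ne hk]
      exact continuous_const
  -- Convexity of the slice of C itself
  have hS : Convex ℝ {xi | f xi ∈ C} := by
    intro p hp q hq a b' ha hb hab
    simp only [Set.mem_setOf_eq, hC, hf] at hp hq ⊢
    obtain ⟨hpX, hpc⟩ := hp
    obtain ⟨hqX, hqc⟩ := hq
    have hpXi : p ∈ X i := by simpa using hpX i
    have hqXi : q ∈ X i := by simpa using hqX i
    constructor
    · intro k
      by_cases hk : k = i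
      · subst hk
        simpa using (hXconv k) hpXi hqXi ha hb hab
      · have := hpX k
        simpa [Function.update_of_ne hk] using this
    · intro j
      have hcc := (hconc j i x).2 hpXi hqXi ha hb hab
      simp only [smul_eq_mul] at hcc
      have h1 : a * α j ≤ a * c j (Function.update x i p) :=
        mul_le_mul_of_nonneg_left (hpc j) ha
      have h2 : b' * α j ≤ b' * c j (Function.update x i q) :=
        mul_le_mul_of_nonneg_left (hqc j) hb
      have hα : α j = a * α j + b' * α j := by rw [← add_mul, hab, one_mul]
      linarith
  -- The component slice is either empty or equals the full slice
  rcases Set.eq_empty_or_nonempty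
      {xi : EuclideanSpace ℝ (Fin (d i)) |
        Function.update x i xi ∈ connectedComponentIn C x₀} with h | ⟨w, hw⟩
  · rw [h]; exact convex_empty
  · have hw' : f w ∈ connectedComponentIn C x₀ := hw
    have hsubC : f '' {xi | f xi ∈ C} ⊆ C := by
      rintro _ ⟨p, hp, rfl⟩; exact hp
    have hpre : IsPreconnected (f '' {xi | f xi ∈ C}) :=
      (hS.isPreconnected).image f hfc.continuousOn
    have hwin : f w ∈ f '' {xi | f xi ∈ C} :=
      Set.mem_image_of_mem f (connectedComponentIn_subset C x₀ hw')
    have himg : f '' {xi | f xi ∈ C} ⊆ connectedComponentIn C (f w) :=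
      hpre.subset_connectedComponentIn hwin hsubC
    have heq : connectedComponentIn C x₀ = connectedComponentIn C (f w) :=
      connectedComponentIn_eq hw'
    have hset : {xi : EuclideanSpace ℝ (Fin (d i)) |
        Function.update x i xi ∈ connectedComponentIn C x₀} = {xi | f xi ∈ C} := by
      apply Set.Subset.antisymm
      · intro p hp
        exact connectedComponentIn_subset C x₀ hp
      · intro p hp
        show f p ∈ connectedComponentIn C x₀
        rw [heq]
        exact himg (Set.mem_image_of_mem f hp)
    rw [hset]
    exact hS
end

section
/- (Perturbed projected gradient ascent does not decrease f.) Let Ω ⊂ ℝⁿ be closed convex, f differentiable, κ ≥ 1. Define x⁺ = P_Ω[x + (1/κ)∇f(x)] and F(x) = κ(x⁺ − x), and assume local κ-smoothness of f along relevant segments. For a perturbation δ ∈ ℝⁿ, let x̃⁺ = P_Ω[x + (1/κ)(∇f(x) + δ)]. If ‖F(x)‖ ≥ 3‖δ‖, then f(x̃⁺) ≥ f(x). -/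
open scoped RealInnerProductSpace

/-- Descent lemma from local smoothness along a segment. -/
lemma descent_aux (n : ℕ) (f : EuclideanSpace ℝ (Fin n) → ℝ) (κ : ℝ) (hκ : 0 < κ)
    (x y : EuclideanSpace ℝ (Fin n))
    (hdiff : ∀ z ∈ segment ℝ x y, DifferentiableAt ℝ f z)
    (hsmooth : ∀ z ∈ segment ℝ x y, ‖gradient f z - gradient f x‖ ≤ κ * ‖z - x‖) :
    f x + ⟪gradient f x, y - x⟫ - κ / 2 * ‖y - x‖ ^ 2 ≤ f y := by
  set d := y - x with hd
  set c : ℝ := ⟪gradient f x, d⟫ with hc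
  set φ : ℝ → ℝ := fun t => f (x + t • d) - t * c + (κ / 2 * ‖d‖ ^ 2) * t ^ 2 with hφ
  have hseg : ∀ t ∈ Set.Icc (0:ℝ) 1, x + t • d ∈ segment ℝ x y := by
    intro t ht
    rw [segment_eq_image']
    exact ⟨t, ht, rfl⟩
  have hder : ∀ t ∈ Set.Icc (0:ℝ) 1, HasDerivAt φ
      (⟪gradient f (x + t • d), d⟫ - c + (κ / 2 * ‖d‖ ^ 2) * (2 * t)) t := by
    intro t ht
    have h1 : HasDerivAt (fun t : ℝ => x + t • d) d t := by
      simpa using ((hasDerivAt_id t).smul_const d).const_add x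
    have hz := (hdiff _ (hseg t ht)).hasGradientAt
    have h2 : HasDerivAt (fun t : ℝ => f (x + t • d)) ⟪gradient f (x + t • d), d⟫ t := by
      have := hz.hasFDerivAt.comp_hasDerivAt t h1
      simpa [InnerProductSpace.toDual_apply_apply, Function.comp_def] using this
    have h3 : HasDerivAt (fun t : ℝ => t * c) c t := by
      simpa using (hasDerivAt_id t).mul_const c
    have h4 : HasDerivAt (fun t : ℝ => (κ / 2 * ‖d‖ ^ 2) * t ^ 2)
        ((κ / 2 * ‖d‖ ^ 2) * (2 * t)) t := by
      simpa [mul_comm] using (hasDerivAt_pow 2 t).const_mul (κ / 2 * ‖d‖ ^ 2)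
    exact (h2.sub h3).add h4
  have hcont : ContinuousOn φ (Set.Icc (0:ℝ) 1) := by
    intro t ht
    exact ((hder t ht).continuousAt).continuousWithinAt
  have hmono : MonotoneOn φ (Set.Icc (0:ℝ) 1) := by
    apply monotoneOn_of_deriv_nonneg (convex_Icc 0 1) hcont
    · intro t ht
      rw [interior_Icc] at ht
      exact ((hder t ⟨le_of_lt ht.1, le_of_lt ht.2⟩).differentiableAt).differentiableWithinAt
    · intro t ht
      rw [interior_Icc] at ht
      have ht' : t ∈ Set.Icc (0:ℝ) 1 := ⟨le_of_lt ht.1, le_of_lt ht.2⟩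
      rw [(hder t ht').deriv]
      have hs := hsmooth _ (hseg t ht')
      have hnorm : ‖x + t • d - x‖ = t * ‖d‖ := by
        simp [norm_smul, abs_of_nonneg (le_of_lt ht.1)]
      rw [hnorm] at hs
      have hinner : ⟪gradient f (x + t • d), d⟫ - c
          = ⟪gradient f (x + t • d) - gradient f x, d⟫ := by
        rw [inner_sub_left, hc]
      have habs := abs_real_inner_le_norm (gradient f (x + t • d) - gradient f x) d
      have hge : -(κ * (t * ‖d‖) * ‖d‖) ≤ ⟪gradient f (x + t • d) - gradient f x, d⟫ := by
        have h1 : ‖gradient f (x + t • d) - gradient f x‖ * ‖d‖ ≤ κ * (t * ‖d‖) * ‖d‖ :=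
          mul_le_mul_of_nonneg_right hs (norm_nonneg d)
        have h2 := neg_abs_le ⟪gradient f (x + t • d) - gradient f x, d⟫
        linarith
      rw [hinner]
      nlinarith [norm_nonneg d]
  have h01 := hmono (Set.left_mem_Icc.2 zero_le_one) (Set.right_mem_Icc.2 zero_le_one)
    zero_le_one
  have hφ0 : φ 0 = f x := by simp [hφ]
  have hφ1 : φ 1 = f y - c + κ / 2 * ‖d‖ ^ 2 := by
    simp only [hφ, one_smul, one_mul, one_pow, mul_one]
    rw [show x + d = y by rw [hd]; abel]
  rw [hφ0, hφ1] at h01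
  linarith

/-- A perturbed projected gradient ascent step does not decrease `f`: with
`x⁺ = P_Ω[x + (1/κ)∇f(x)]`, `F(x) = κ(x⁺ - x)`, `x̃⁺ = P_Ω[x + (1/κ)(∇f(x) + δ)]`
(both projections characterized by their variational inequalities), local `κ`-smoothness
along the segments `[x,x⁺]` and `[x,x̃⁺]`, and `‖F(x)‖ ≥ 3‖δ‖`, we get `f(x̃⁺) ≥ f(x)`. -/
theorem perturbed_projected_step_no_decrease (n : ℕ)
    (Ω : Set (EuclideanSpace ℝ (Fin n))) (hΩc : IsClosed Ω) (hΩconv : Convex ℝ Ω)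
    (f : EuclideanSpace ℝ (Fin n) → ℝ) (κ : ℝ) (hκ : 1 ≤ κ)
    (δ : EuclideanSpace ℝ (Fin n))
    (x xp xtp : EuclideanSpace ℝ (Fin n)) (hx : x ∈ Ω) (hxp : xp ∈ Ω) (hxtp : xtp ∈ Ω)
    (hproj : ∀ z ∈ Ω, ⟪x + (1 / κ) • gradient f x - xp, z - xp⟫ ≤ 0)
    (hprojt : ∀ z ∈ Ω, ⟪x + (1 / κ) • (gradient f x + δ) - xtp, z - xtp⟫ ≤ 0)
    (hdiff : ∀ y ∈ segment ℝ x xp ∪ segment ℝ x xtp, DifferentiableAt ℝ f y)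
    (hsmooth : ∀ y ∈ segment ℝ x xp ∪ segment ℝ x xtp,
      ‖gradient f y - gradient f x‖ ≤ κ * ‖y - x‖)
    (hF : 3 * ‖δ‖ ≤ ‖κ • (xp - x)‖) :
    f x ≤ f xtp := by
  have hκ0 : (0:ℝ) < κ := lt_of_lt_of_le one_pos hκ
  set g := gradient f x with hg
  set d := xtp - x with hdd
  set e := xtp - xp with hee
  -- Step 1: variational inequality at xtp with z = x
  have hVI : κ * ‖d‖ ^ 2 ≤ ⟪g, d⟫ + ⟪δ, d⟫ := by
    have h1 := hprojt x hx
    have heq : x + (1 / κ) • (g + δ) - xtp = (1 / κ) • (g + δ) - d := by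
      rw [hdd]; abel
    have heq2 : x - xtp = -d := by rw [hdd]; abel
    rw [heq, heq2] at h1
    have h2 : ⟪(1 / κ) • (g + δ) - d, -d⟫
        = -((1/κ) * (⟪g, d⟫ + ⟪δ, d⟫)) + ‖d‖ ^ 2 := by
      rw [inner_neg_right, inner_sub_left, real_inner_smul_left, inner_add_left,
        real_inner_self_eq_norm_sq]
      ring
    rw [h2] at h1
    have h3 := mul_le_mul_of_nonneg_left h1 (le_of_lt hκ0)
    have h4 : κ * ((1/κ) * (⟪g, d⟫ + ⟪δ, d⟫)) = ⟪g, d⟫ + ⟪δ, d⟫ := by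
      field_simp
    nlinarith
  -- Step 2: non-expansiveness
  have hne : κ * ‖e‖ ≤ ‖δ‖ := by
    have hA' : ⟪x + (1 / κ) • g - xp, e⟫ ≤ 0 := hproj xtp hxtp
    have hB' : ⟪x + (1 / κ) • (g + δ) - xtp, -e⟫ ≤ 0 := by
      have h0 : xp - xtp = -e := by rw [hee]; abel
      rw [← h0]; exact hprojt xp hxp
    have hsum : ⟪(x + (1 / κ) • g - xp) - (x + (1 / κ) • (g + δ) - xtp), e⟫ ≤ 0 := by
      rw [inner_sub_left]
      rw [inner_neg_right] at hB'
      linarith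
    have heq3 : (x + (1 / κ) • g - xp) - (x + (1 / κ) • (g + δ) - xtp)
        = e - (1 / κ) • δ := by
      rw [hee, smul_add]; abel
    rw [heq3] at hsum
    have hsum' : ‖e‖ ^ 2 - (1/κ) * ⟪δ, e⟫ ≤ 0 := by
      rw [inner_sub_left, real_inner_smul_left, real_inner_self_eq_norm_sq] at hsum
      linarith
    have hde : ⟪δ, e⟫ ≤ ‖δ‖ * ‖e‖ := real_inner_le_norm δ e
    have key : κ * ‖e‖ ^ 2 ≤ ‖δ‖ * ‖e‖ := by
      have h5 := mul_le_mul_of_nonneg_left hsum' (le_of_lt hκ0)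
      have h6 : κ * ((1/κ) * ⟪δ, e⟫) = ⟪δ, e⟫ := by field_simp
      nlinarith
    rcases eq_or_lt_of_le (norm_nonneg e) with h | h
    · rw [← h]; simp [norm_nonneg]
    · exact (mul_le_mul_iff_of_pos_right h).1 (by nlinarith : (κ * ‖e‖) * ‖e‖ ≤ ‖δ‖ * ‖e‖)
  -- Step 3: lower bound on ‖d‖
  have hFb : 3 * ‖δ‖ ≤ κ * ‖xp - x‖ := by
    rwa [norm_smul, Real.norm_eq_abs, abs_of_pos hκ0] at hF
  have htri : ‖xp - x‖ - ‖e‖ ≤ ‖d‖ := by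
    have h7 := norm_sub_norm_le (xp - x) (xp - xtp)
    have h8 : xp - x - (xp - xtp) = d := by rw [hdd]; abel
    have h9 : ‖xp - xtp‖ = ‖e‖ := by rw [hee, ← norm_neg]; congr 1; abel
    rw [h8, h9] at h7
    linarith
  have hka : 2 * ‖δ‖ ≤ κ * ‖d‖ := by nlinarith [norm_nonneg e, norm_nonneg (xp - x)]
  -- Step 4: descent lemma
  have hdesc := descent_aux n f κ hκ0 x xtp
    (fun z hz => hdiff z (Set.mem_union_right _ hz))
    (fun z hz => hsmooth z (Set.mem_union_right _ hz))
  rw [← hdd, ← hg] at hdesc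
  have hδd : ⟪δ, d⟫ ≤ ‖δ‖ * ‖d‖ := real_inner_le_norm δ d
  nlinarith [norm_nonneg d, mul_nonneg (norm_nonneg d) (by linarith : (0:ℝ) ≤ κ * ‖d‖ - 2 * ‖δ‖)]
end

section
/- (Feasibility margin preservation under small steps.) Suppose x⁽ᵗ⁾ ∈ C is β-feasible (cⱼ(x⁽ᵗ⁾) − αⱼ ≥ β ∀j), each uᵢ and cⱼ is L-Lipschitz, and each player updates xᵢ⁽ᵗ⁺¹⁾ = P_{Xᵢ}[xᵢ⁽ᵗ⁾ + γ∇_{xᵢ}B^η_i(x⁽ᵗ⁾)] with B^η_i(x) = uᵢ(x) + η Σⱼ log(cⱼ(x) − αⱼ). If γ ≤ β²/(2mL²(β + ηb)), then every point x̂ on the segment [x⁽ᵗ⁾, x⁽ᵗ⁺¹⁾] is (β/2)-feasible, i.e., cⱼ(x̂) − αⱼ ≥ β/2 for all j ∈ [b]. -/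
open scoped RealInnerProductSpace

lemma log_lip {s a a' : ℝ} (hs : 0 < s) (ha : s ≤ a) (ha' : s ≤ a') :
    |Real.log a - Real.log a'| ≤ |a - a'| / s := by
  have key : ∀ p q : ℝ, s ≤ p → s ≤ q → q ≤ p →
      Real.log p - Real.log q ≤ (p - q) / s := by
    intro p q hp hq hqp
    have hq0 : 0 < q := lt_of_lt_of_le hs hq
    have hp0 : 0 < p := lt_of_lt_of_le hs hp
    have h1 : Real.log p - Real.log q = Real.log (p / q) := by
      rw [Real.log_div hp0.ne' hq0.ne']
    have h2 : Real.log (p / q) ≤ p / q - 1 :=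
      Real.log_le_sub_one_of_pos (by positivity)
    have h3 : p / q - 1 ≤ (p - q) / s := by
      rw [div_sub_one hq0.ne', div_le_div_iff₀ hq0 hs]
      nlinarith
    linarith
  rcases le_total a' a with h | h
  · have hm : Real.log a' ≤ Real.log a := Real.log_le_log (lt_of_lt_of_le hs ha') h
    rw [abs_of_nonneg (by linarith : (0:ℝ) ≤ a - a'),
      abs_of_nonneg (by linarith : (0:ℝ) ≤ Real.log a - Real.log a')]
    exact key a a' ha ha' h
  · have hm : Real.log a ≤ Real.log a' := Real.log_le_log (lt_of_lt_of_le hs ha) h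
    rw [abs_sub_comm, abs_sub_comm a a',
      abs_of_nonneg (by linarith : (0:ℝ) ≤ a' - a),
      abs_of_nonneg (by linarith : (0:ℝ) ≤ Real.log a' - Real.log a)]
    exact key a' a ha' ha h

lemma barrier_gradient_bound {E : Type*} [NormedAddCommGroup E] [InnerProductSpace ℝ E]
    [CompleteSpace E] {b : ℕ} (f : E → ℝ) (g : Fin b → E → ℝ) (L β η : ℝ)
    (hL : 0 < L) (hβ : 0 < β) (hη : 0 < η)
    (hf : ∀ y y', |f y - f y'| ≤ L * ‖y - y'‖)
    (hg : ∀ j y y', |g j y - g j y'| ≤ L * ‖y - y'‖)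
    (x₀ : E) (hfeas : ∀ j, β ≤ g j x₀) :
    ‖gradient (fun y => f y + η * ∑ j, Real.log (g j y)) x₀‖ ≤ L * (β + η * b) / β := by
  have hnormeq : ‖gradient (fun y => f y + η * ∑ j, Real.log (g j y)) x₀‖
      = ‖fderiv ℝ (fun y => f y + η * ∑ j, Real.log (g j y)) x₀‖ :=
    (InnerProductSpace.toDual ℝ E).symm.norm_map _
  rw [hnormeq]
  refine le_of_forall_pos_le_add fun δ hδ => ?_
  have hC : (0:ℝ) ≤ L * (β + η * b) / β + δ := by positivity
  refine norm_fderiv_le_of_lip' ℝ hC ?_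
  set ε : ℝ := min (β / (2 * L)) (δ * β ^ 2 / (2 * L ^ 2 * η * b + 1)) with hεdef
  have hε : 0 < ε := lt_min (by positivity) (by positivity)
  have hεβ : L * ε ≤ β / 2 := by
    have h1 : ε ≤ β / (2 * L) := min_le_left _ _
    rw [le_div_iff₀ (by positivity)] at h1
    nlinarith
  have hs : 0 < β - L * ε := by linarith
  have hε2 : (2 * L ^ 2 * η * b + 1) * ε ≤ δ * β ^ 2 := by
    have h1 : ε ≤ δ * β ^ 2 / (2 * L ^ 2 * η * b + 1) := min_le_right _ _
    rw [le_div_iff₀ (by positivity)] at h1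
    linarith
  have hkey : L + η * b * L / (β - L * ε) ≤ L * (β + η * b) / β + δ := by
    have e1 : η * b * L / (β - L * ε) = η * b * L / β + η * b * L * (L * ε) / ((β - L * ε) * β) := by
      field_simp
      ring
    have e2 : η * b * L * (L * ε) / ((β - L * ε) * β) ≤ δ := by
      rw [div_le_iff₀ (by positivity)]
      nlinarith [mul_nonneg (mul_nonneg hη.le (Nat.cast_nonneg b)) hL.le,
        mul_pos hδ hβ, mul_nonneg hδ.le hβ.le, mul_nonneg (mul_nonneg hδ.le hβ.le) hs.le]
    have e3 : L * (β + η * b) / β = L + η * b * L / β := by field_simp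
    rw [e3]
    linarith
  filter_upwards [Metric.ball_mem_nhds x₀ hε] with y hy
  have hyd : ‖y - x₀‖ < ε := by rwa [Metric.mem_ball, dist_eq_norm] at hy
  have hN : (0:ℝ) ≤ ‖y - x₀‖ := norm_nonneg _
  have hge : ∀ j, β - L * ‖y - x₀‖ ≤ g j y := by
    intro j
    have h := (abs_le.1 (hg j y x₀)).1
    linarith [hfeas j]
  have hlog : ∀ j, |Real.log (g j y) - Real.log (g j x₀)| ≤ L * ‖y - x₀‖ / (β - L * ε) := by
    intro j
    have h1 : β - L * ε ≤ g j y := le_trans (by nlinarith) (hge j)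
    have h2 : β - L * ε ≤ g j x₀ := le_trans (by nlinarith) (hfeas j)
    refine le_trans (log_lip hs h1 h2) ?_
    exact div_le_div_of_nonneg_right (hg j y x₀) hs.le
  have hsum : |(∑ j, Real.log (g j y)) - ∑ j, Real.log (g j x₀)|
      ≤ (b : ℝ) * (L * ‖y - x₀‖ / (β - L * ε)) := by
    rw [← Finset.sum_sub_distrib]
    refine le_trans (Finset.abs_sum_le_sum_abs _ _) ?_
    refine le_trans (Finset.sum_le_card_nsmul _ _ _ fun j _ => hlog j) ?_
    simp [nsmul_eq_mul]
  have hbound : |(f y + η * ∑ j, Real.log (g j y)) - (f x₀ + η * ∑ j, Real.log (g j x₀))|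
      ≤ (L + η * b * L / (β - L * ε)) * ‖y - x₀‖ := by
    have h1 := hf y x₀
    have h2 : |η * ((∑ j, Real.log (g j y)) - ∑ j, Real.log (g j x₀))|
        ≤ η * ((b : ℝ) * (L * ‖y - x₀‖ / (β - L * ε))) := by
      rw [abs_mul, abs_of_pos hη]
      exact mul_le_mul_of_nonneg_left hsum hη.le
    have h3 := abs_add_le (f y - f x₀) (η * ((∑ j, Real.log (g j y)) - ∑ j, Real.log (g j x₀)))
    have e : (f y + η * ∑ j, Real.log (g j y)) - (f x₀ + η * ∑ j, Real.log (g j x₀))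
        = (f y - f x₀) + η * ((∑ j, Real.log (g j y)) - ∑ j, Real.log (g j x₀)) := by ring
    rw [e]
    have e2 : (L + η * b * L / (β - L * ε)) * ‖y - x₀‖
        = L * ‖y - x₀‖ + η * ((b : ℝ) * (L * ‖y - x₀‖ / (β - L * ε))) := by ring
    rw [e2]
    exact le_trans h3 (add_le_add h1 h2)
  rw [Real.norm_eq_abs]
  refine le_trans hbound ?_
  exact mul_le_mul_of_nonneg_right hkey hN

lemma pilp_norm_le_of_forall {ι : Type*} [Fintype ι]
    {F : ι → Type*} [∀ i, SeminormedAddCommGroup (F i)]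
    (v : PiLp 2 F) (r : ℝ) (hr : 0 ≤ r) (hm : 1 ≤ Fintype.card ι)
    (h : ∀ i, ‖v i‖ ≤ r) : ‖v‖ ≤ (Fintype.card ι : ℝ) * r := by
  set m : ℝ := (Fintype.card ι : ℝ) with hmdef
  have hm1 : (1:ℝ) ≤ m := by rw [hmdef]; exact_mod_cast hm
  rw [PiLp.norm_eq_of_L2]
  have hsum : ∑ i, ‖v i‖ ^ 2 ≤ (m * r) ^ 2 := by
    calc ∑ i, ‖v i‖ ^ 2 ≤ ∑ _i : ι, r ^ 2 :=
          Finset.sum_le_sum fun i _ => pow_le_pow_left₀ (norm_nonneg _) (h i) 2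
      _ = m * r ^ 2 := by simp [m, mul_comm]
      _ ≤ (m * r) ^ 2 := by nlinarith
  calc Real.sqrt (∑ i, ‖v i‖ ^ 2) ≤ Real.sqrt ((m * r) ^ 2) := Real.sqrt_le_sqrt hsum
    _ = m * r := Real.sqrt_sq (by positivity)

lemma proj_step_bound {E : Type*} [NormedAddCommGroup E] [InnerProductSpace ℝ E]
    (p q g : E) (γ : ℝ) (hγ : 0 ≤ γ)
    (h : ⟪p + γ • g - q, p - q⟫ ≤ 0) : ‖q - p‖ ≤ γ * ‖g‖ := by
  have e : p + γ • g - q = γ • g + (p - q) := by abel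
  rw [e, inner_add_left, real_inner_smul_left, real_inner_self_eq_norm_sq] at h
  have h2 : γ * ⟪g, p - q⟫ ≤ γ * (‖g‖ * ‖p - q‖) :=
    mul_le_mul_of_nonneg_left (real_inner_le_norm g (p - q)) hγ
  have h3 : -(γ * ⟪g, p - q⟫) ≤ γ * (‖g‖ * ‖p - q‖) := by
    have := mul_le_mul_of_nonneg_left (neg_le_of_abs_le (abs_real_inner_le_norm g (p - q))) hγ
    linarith [this]
  rw [norm_sub_rev]
  nlinarith [norm_nonneg (p - q), norm_nonneg g, h, h3, mul_nonneg hγ (norm_nonneg g)]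
lemma pilp2_norm_le_single {ι : Type*} [Fintype ι] {F : ι → Type*}
    [∀ k, SeminormedAddCommGroup (F k)] (v : PiLp 2 F) (i : ι) (r : ℝ) (hr : 0 ≤ r)
    (hi : ‖v i‖ ≤ r) (h0 : ∀ k, k ≠ i → v k = 0) : ‖v‖ ≤ r := by
  rw [PiLp.norm_eq_of_L2,
    Finset.sum_eq_single i (fun k _ hk => by rw [h0 k hk]; simp)
      (fun h => absurd (Finset.mem_univ i) h)]
  rw [Real.sqrt_sq_eq_abs, abs_norm]
  exact hi

lemma seg_feas {G : Type*} [NormedAddCommGroup G] [NormedSpace ℝ G]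
    (cf : G → ℝ) (L β t : ℝ) (x xnext : G) (hβ : 0 < β)
    (hc : ∀ y y', |cf y - cf y'| ≤ L * ‖y - y'‖)
    (hfe : β ≤ cf x) (ht0 : 0 ≤ t) (ht1 : t ≤ 1)
    (hstep : L * ‖xnext - x‖ ≤ β / 2) :
    β / 2 ≤ cf ((1 - t) • x + t • xnext) := by
  have h := hc ((1 - t) • x + t • xnext) x
  have e : ((1 - t) • x + t • xnext) - x = t • (xnext - x) := by module
  rw [e, norm_smul, Real.norm_eq_abs, abs_of_nonneg ht0] at h
  have h1 := (abs_le.1 h).1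
  nlinarith [mul_le_mul_of_nonneg_left hstep ht0, norm_nonneg (xnext - x),
    mul_nonneg (by linarith : (0:ℝ) ≤ 1 - t) hβ.le]

/-- Feasibility margin preservation under small steps: if `x` is `β`-feasible, all
utilities and constraints are `L`-Lipschitz in the joint (ℓ₂) variable, each player takes
a projected log-barrier gradient step with stepsize `γ ≤ β²/(2mL²(β+ηb))`, then every
point on the segment between the old and new joint profiles is `β/2`-feasible. -/
theorem step_preserves_feasibility {ι : Type*} [Fintype ι] [DecidableEq ι] (d : ι → ℕ)
    (X : ∀ i, Set (EuclideanSpace ℝ (Fin (d i))))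
    (hXconv : ∀ i, Convex ℝ (X i)) (hXcomp : ∀ i, IsCompact (X i))
    (b : ℕ) (u : ι → PiLp 2 (fun i => EuclideanSpace ℝ (Fin (d i))) → ℝ)
    (c : Fin b → PiLp 2 (fun i => EuclideanSpace ℝ (Fin (d i))) → ℝ) (α : Fin b → ℝ)
    (L β η γ : ℝ) (hL : 0 < L) (hβ : 0 < β) (hη : 0 < η) (hγpos : 0 < γ)
    (huLip : ∀ i (y y' : PiLp 2 fun i => EuclideanSpace ℝ (Fin (d i))),
      |u i y - u i y'| ≤ L * ‖y - y'‖)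
    (hcLip : ∀ j (y y' : PiLp 2 fun i => EuclideanSpace ℝ (Fin (d i))),
      |c j y - c j y'| ≤ L * ‖y - y'‖)
    (x xnext : PiLp 2 fun i => EuclideanSpace ℝ (Fin (d i)))
    (hxX : ∀ i, x i ∈ X i)
    (hfeas : ∀ j, β ≤ c j x - α j)
    (hγ : γ ≤ β ^ 2 / (2 * (Fintype.card ι) * L ^ 2 * (β + η * b)))
    (hxnextX : ∀ i, xnext i ∈ X i)
    (hproj : ∀ i, ∀ z ∈ X i,
      ⟪x i + γ • gradient (fun xi => u i (WithLp.toLp 2 (Function.update x i xi))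
          + η * ∑ j, Real.log (c j (WithLp.toLp 2 (Function.update x i xi)) - α j)) (x i)
        - xnext i, z - xnext i⟫ ≤ 0) :
    ∀ t ∈ Set.Icc (0:ℝ) 1, ∀ j, β / 2 ≤ c j ((1 - t) • x + t • xnext) - α j := by
  intro t ht j
  -- handle the degenerate case of no players
  rcases Nat.eq_zero_or_pos (Fintype.card ι) with h0 | hmpos
  · rw [h0] at hγ
    norm_num at hγ
    linarith
  have hm1 : (1:ℝ) ≤ (Fintype.card ι : ℝ) := by exact_mod_cast hmpos
  have hA : (0:ℝ) < β + η * b := by positivity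
  set Gm : ℝ := L * (β + η * b) / β with hGm
  have hGm0 : 0 ≤ Gm := by positivity
  -- per-player gradient norm bound
  have hgrad : ∀ i, ‖gradient (fun xi => u i (WithLp.toLp 2 (Function.update x i xi))
      + η * ∑ j, Real.log (c j (WithLp.toLp 2 (Function.update x i xi)) - α j)) (x i)‖ ≤ Gm := by
    intro i
    have hf : ∀ y y' : EuclideanSpace ℝ (Fin (d i)),
        |u i (WithLp.toLp 2 (Function.update x i y)) - u i (WithLp.toLp 2 (Function.update x i y'))| ≤ L * ‖y - y'‖ := by
      intro y y'
      refine (huLip i (WithLp.toLp 2 (Function.update x i y)) (WithLp.toLp 2 (Function.update x i y'))).trans ?_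
      refine mul_le_mul_of_nonneg_left ?_ hL.le
      refine pilp2_norm_le_single _ i ‖y - y'‖ (norm_nonneg _) ?_ ?_
      · show ‖Function.update x i y i - Function.update x i y' i‖ ≤ ‖y - y'‖
        simp
      · intro k hk
        show Function.update x i y k - Function.update x i y' k = 0
        simp [Function.update_of_ne hk]
    have hg : ∀ (j' : Fin b) (y y' : EuclideanSpace ℝ (Fin (d i))),
        |(c j' (WithLp.toLp 2 (Function.update x i y)) - α j') - (c j' (WithLp.toLp 2 (Function.update x i y')) - α j')|
          ≤ L * ‖y - y'‖ := by
      intro j' y y'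
      rw [sub_sub_sub_cancel_right]
      refine (hcLip j' (WithLp.toLp 2 (Function.update x i y)) (WithLp.toLp 2 (Function.update x i y'))).trans ?_
      refine mul_le_mul_of_nonneg_left ?_ hL.le
      refine pilp2_norm_le_single _ i ‖y - y'‖ (norm_nonneg _) ?_ ?_
      · show ‖Function.update x i y i - Function.update x i y' i‖ ≤ ‖y - y'‖
        simp
      · intro k hk
        show Function.update x i y k - Function.update x i y' k = 0
        simp [Function.update_of_ne hk]
    have hfe : ∀ j' : Fin b, β ≤ c j' (WithLp.toLp 2 (Function.update x i (x i))) - α j' := by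
      intro j'
      rw [Function.update_eq_self]
      exact hfeas j'
    exact barrier_gradient_bound (fun y => u i (WithLp.toLp 2 (Function.update x i y)))
      (fun j' y => c j' (WithLp.toLp 2 (Function.update x i y)) - α j') L β η hL hβ hη hf hg (x i) hfe
  -- per-player step bound
  have hstep : ∀ i, ‖xnext i - x i‖ ≤ γ * Gm := by
    intro i
    have hpq := proj_step_bound (x i) (xnext i)
      (gradient (fun xi => u i (WithLp.toLp 2 (Function.update x i xi))
        + η * ∑ j, Real.log (c j (WithLp.toLp 2 (Function.update x i xi)) - α j)) (x i)) γ hγpos.le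
      (hproj i (x i) (hxX i))
    exact hpq.trans (mul_le_mul_of_nonneg_left (hgrad i) hγpos.le)
  -- joint step bound
  have hjoint : ‖xnext - x‖ ≤ (Fintype.card ι : ℝ) * (γ * Gm) := by
    refine pilp_norm_le_of_forall _ _ (by positivity) hmpos ?_
    intro i
    show ‖xnext i - x i‖ ≤ γ * Gm
    exact hstep i
  -- total movement bound
  have hmove : L * ‖xnext - x‖ ≤ β / 2 := by
    have h1 : L * ‖xnext - x‖ ≤ L * ((Fintype.card ι : ℝ) * (γ * Gm)) :=
      mul_le_mul_of_nonneg_left hjoint hL.le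
    refine h1.trans ?_
    rw [le_div_iff₀ (by positivity : (0:ℝ) < 2 * (Fintype.card ι : ℝ) * L ^ 2 * (β + η * b))] at hγ
    rw [hGm]
    rw [show L * ((Fintype.card ι : ℝ) * (γ * (L * (β + η * b) / β)))
        = (γ * (2 * (Fintype.card ι : ℝ) * L ^ 2 * (β + η * b))) / (2 * β) from by ring]
    rw [div_le_div_iff₀ (by positivity : (0:ℝ) < 2 * β) (by norm_num : (0:ℝ) < 2)]
    nlinarith [mul_pos hβ hβ]
  exact seg_feas (fun y => c j y - α j) L β t x xnext hβ
    (fun y y' => by rw [sub_sub_sub_cancel_right]; exact hcLip j y y')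
    (hfeas j) ht.1 ht.2 hmove
end
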